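/- Let Ω > 0, let Γ = [[0, −1/(iΩ)], [1/(iΩ), 0]], let δ ∈ ℝ, let M, D, E, X, V, φ be real with X ≠ 0, D > 0, and den = ((V·E/X)·cos φ − M·Ω²)² + (Ω·D)² > 0. Define γ = (E²/X²)·[ (−M·Ω² + (V·E/X)·cos φ) − i·(Ω·D) ] / den and Y_g = γ·[[sin δ cos δ, −cos²δ], [sin²δ, −sin δ cos δ]] + [[0, 1/X], [−1/X, 0]]. Then the Hermitian matrix Y_gΓ + (Y_gΓ)* is positive semidefinite, but it is not positive definite (it has 0 as an eigenvalue). That is, the DEF passivity transformation renders the positively damped classical generator passive but not strictly passive. -/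

import Mathlib

open Matrix Complex ComplexOrder

lemma auxfact (g x w sc cc : ℂ) :
    (g • !![sc * cc, -(cc ^ 2); sc ^ 2, -(sc * cc)] + !![0, x; -x, 0]) *
      !![(0 : ℂ), -w; w, 0] =
    (-(g * w)) • !![cc ^ 2, sc * cc; sc * cc, sc ^ 2] + (w * x) • 1 := by
  ext i j
  fin_cases i <;> fin_cases j <;>
    · simp [Matrix.mul_apply, Fin.sum_univ_two, Matrix.one_apply]
      ring

set_option maxHeartbeats 1000000 in
/-- With positive damping `D > 0`, the DEF passivity
transformation renders the classical generator passive but not strictly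
passive: `Y_gΓ + (Y_gΓ)*` is positive semidefinite but not positive definite. -/
theorem stmt5 (Ω : ℝ) (hΩ : 0 < Ω) (δ M D E X V φ : ℝ) (hX : X ≠ 0) (hD : 0 < D)
    (hden : 0 < ((V * E / X) * Real.cos φ - M * Ω ^ 2) ^ 2 + (Ω * D) ^ 2) :
    let Γ : Matrix (Fin 2) (Fin 2) ℂ :=
      !![0, -(1 / (Complex.I * Ω)); 1 / (Complex.I * Ω), 0]
    let den : ℝ := ((V * E / X) * Real.cos φ - M * Ω ^ 2) ^ 2 + (Ω * D) ^ 2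
    let γ : ℂ := ((E ^ 2 / X ^ 2 : ℝ) : ℂ) *
      (((-(M * Ω ^ 2) + (V * E / X) * Real.cos φ : ℝ) : ℂ) -
        Complex.I * ((Ω * D : ℝ) : ℂ)) / ((den : ℝ) : ℂ)
    let Yg : Matrix (Fin 2) (Fin 2) ℂ :=
      γ • !![(Real.sin δ : ℂ) * (Real.cos δ : ℂ), -((Real.cos δ : ℂ) ^ 2);
             (Real.sin δ : ℂ) ^ 2, -((Real.sin δ : ℂ) * (Real.cos δ : ℂ))] +
        !![0, 1 / (X : ℂ); -(1 / (X : ℂ)), 0]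
    (Yg * Γ + (Yg * Γ)ᴴ).PosSemidef ∧ ¬(Yg * Γ + (Yg * Γ)ᴴ).PosDef ∧
      (0 : ℂ) ∈ spectrum ℂ (Yg * Γ + (Yg * Γ)ᴴ) := by
  intro Γ den γ Yg
  have hden_pos : 0 < den := hden
  have hγ_def : γ = ((E ^ 2 / X ^ 2 : ℝ) : ℂ) *
      (((-(M * Ω ^ 2) + (V * E / X) * Real.cos φ : ℝ) : ℂ) -
        Complex.I * ((Ω * D : ℝ) : ℂ)) / ((den : ℝ) : ℂ) := rfl
  have hΓ_def : Γ = !![0, -(1 / (Complex.I * Ω)); 1 / (Complex.I * Ω), 0] := rfl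
  have hYg_def : Yg = γ • !![(Real.sin δ : ℂ) * (Real.cos δ : ℂ), -((Real.cos δ : ℂ) ^ 2);
             (Real.sin δ : ℂ) ^ 2, -((Real.sin δ : ℂ) * (Real.cos δ : ℂ))] +
        !![0, 1 / (X : ℂ); -(1 / (X : ℂ)), 0] := rfl
  clear_value Γ den γ Yg
  have hden' : (den : ℂ) ≠ 0 := by exact_mod_cast hden_pos.ne'
  have hΩ' : (Ω : ℂ) ≠ 0 := by exact_mod_cast hΩ.ne'
  have hX' : (X : ℂ) ≠ 0 := by exact_mod_cast hX
  have hI : Complex.I ≠ 0 := Complex.I_ne_zero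
  set a : ℝ := 2 * D * E ^ 2 / X ^ 2 / den with ha
  have ha0 : 0 ≤ a := by
    have : (0:ℝ) < den := hden_pos
    positivity
  set P : Matrix (Fin 2) (Fin 2) ℂ :=
    !![(Real.cos δ : ℂ) ^ 2, (Real.sin δ : ℂ) * (Real.cos δ : ℂ);
       (Real.sin δ : ℂ) * (Real.cos δ : ℂ), (Real.sin δ : ℂ) ^ 2] with hP
  -- scalar facts
  have key : -(γ * (1 / (Complex.I * Ω))) +
      star (-(γ * (1 / (Complex.I * Ω)))) = ((a : ℝ) : ℂ) := by
    rw [Complex.star_def, hγ_def, ha]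
    set cφ := Real.cos φ
    simp only [map_neg, map_div₀, _root_.map_mul, _root_.map_one, map_sub,
      Complex.conj_I, Complex.conj_ofReal]
    push_cast
    field_simp
    ring_nf
    try simp [Complex.I_sq]
    try ring
  have key2 : 1 / (Complex.I * Ω) * (1 / (X : ℂ)) +
      star (1 / (Complex.I * Ω) * (1 / (X : ℂ))) = 0 := by
    rw [Complex.star_def]
    simp only [map_div₀, _root_.map_mul, _root_.map_one, Complex.conj_I,
      Complex.conj_ofReal]
    field_simp
    ring
  -- factorization of Yg * Γ
  have hfact : Yg * Γ = (-(γ * (1 / (Complex.I * Ω)))) • P +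
      (1 / (Complex.I * Ω) * (1 / (X : ℂ))) • (1 : Matrix (Fin 2) (Fin 2) ℂ) := by
    rw [hYg_def, hΓ_def]
    exact auxfact γ (1 / (X : ℂ)) (1 / (Complex.I * Ω)) _ _
  have hPherm : Pᴴ = P := by
    ext i j
    fin_cases i <;> fin_cases j <;>
      simp [P, Matrix.conjTranspose_apply, ← Complex.ofReal_cos, ← Complex.ofReal_sin,
        ← Complex.ofReal_pow, ← Complex.ofReal_mul, Complex.conj_ofReal, mul_comm]
  have hH : Yg * Γ + (Yg * Γ)ᴴ = ((a : ℝ) : ℂ) • P := by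
    rw [hfact, conjTranspose_add, conjTranspose_smul, conjTranspose_smul, hPherm,
      conjTranspose_one, add_add_add_comm, ← add_smul, ← add_smul, key, key2,
      zero_smul, add_zero]
  -- positive semidefinite
  set B : Matrix (Fin 2) (Fin 2) ℂ :=
    !![((Real.sqrt a : ℝ) : ℂ) * ((Real.cos δ : ℝ) : ℂ),
       ((Real.sqrt a : ℝ) : ℂ) * ((Real.sin δ : ℝ) : ℂ); 0, 0] with hB
  have hBB : ((a : ℝ) : ℂ) • P = Bᴴ * B := by
    have hsq : Real.sqrt a * Real.sqrt a = a := Real.mul_self_sqrt ha0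
    have hsqC : ((Real.sqrt a : ℝ) : ℂ) * ((Real.sqrt a : ℝ) : ℂ) = ((a : ℝ) : ℂ) := by
      rw [← Complex.ofReal_mul, hsq]
    ext i j
    fin_cases i <;> fin_cases j <;>
      · simp [hB, hP, Matrix.mul_apply, Fin.sum_univ_two, Matrix.conjTranspose_apply,
          _root_.map_mul, Complex.conj_ofReal, -Complex.ofReal_cos, -Complex.ofReal_sin]
        rw [← hsqC]
        ring
  have hpsd : (Yg * Γ + (Yg * Γ)ᴴ).PosSemidef := by
    rw [hH, hBB]; exact posSemidef_conjTranspose_mul_self B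
  -- kernel vector
  set v : Fin 2 → ℂ := ![-(Real.sin δ : ℂ), (Real.cos δ : ℂ)] with hv
  have hvne : v ≠ 0 := by
    have h1 : Real.sin δ ^ 2 + Real.cos δ ^ 2 = 1 := Real.sin_sq_add_cos_sq δ
    intro h
    have h0 : v 0 = 0 := by rw [h]; rfl
    have h1' : v 1 = 0 := by rw [h]; rfl
    simp only [hv, Matrix.cons_val_zero, Matrix.cons_val_one, Matrix.head_cons,
      neg_eq_zero, Complex.ofReal_eq_zero] at h0 h1'
    rw [h0, h1'] at h1
    norm_num at h1
  have hker : (Yg * Γ + (Yg * Γ)ᴴ) *ᵥ v = 0 := by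
    rw [hH]
    ext i
    fin_cases i <;>
      · simp [hP, hv, Matrix.mulVec, dotProduct, Fin.sum_univ_two]
        ring
  have hquad : dotProduct (star v) ((Yg * Γ + (Yg * Γ)ᴴ) *ᵥ v) = 0 := by
    rw [hker, dotProduct_zero]
  refine ⟨hpsd, ?_, ?_⟩
  · intro hpd
    have := hpd.dotProduct_mulVec_pos hvne
    rw [hquad] at this
    exact lt_irrefl _ this
  · rw [spectrum.mem_iff]
    intro hunit
    rw [Matrix.isUnit_iff_isUnit_det] at hunit
    have hdet : ((algebraMap ℂ (Matrix (Fin 2) (Fin 2) ℂ)) 0 - (Yg * Γ + (Yg * Γ)ᴴ)).det = 0 := by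
      rw [map_zero, zero_sub, Matrix.det_neg, hH]
      have h2 : (((a : ℝ) : ℂ) • P).det = 0 := by
        rw [Matrix.det_smul]
        have h3 : P.det = 0 := by
          rw [hP, Matrix.det_fin_two_of]; ring
        rw [h3, mul_zero]
      rw [h2, mul_zero]
    rw [hdet] at hunit
    exact hunit.ne_zero rfl
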